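/- For every β ∈ ℝ, ∫_0^{L(β)} 2/(1 − βt²) dt = 𝓛(β); that is, the integral equals 2β^{−1/2} sinh^{−1}(√(e^β − 1)) for β > 0, equals 2 for β = 0, and equals 2|β|^{−1/2} sin^{−1}(√(1 − e^β)) for β < 0. -/

import Mathlib

/-- `L(β) = ((1-e^{-β})/β)^{1/2}` for `β ≠ 0`, `L(0) = 1`. -/
noncomputable def Lb (β : ℝ) : ℝ :=
  if β = 0 then 1 else Real.sqrt ((1 - Real.exp (-β)) / β)

/-- The limit function 𝓛(β). -/
noncomputable def calL (β : ℝ) : ℝ :=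
  if 0 < β then 2 / Real.sqrt β * Real.arsinh (Real.sqrt (Real.exp β - 1))
  else if β < 0 then 2 / Real.sqrt |β| * Real.arcsin (Real.sqrt (1 - Real.exp β))
  else 2

/-- The integral formula: `∫_0^{L(β)} 2/(1-βt²) dt = 𝓛(β)` for every `β ∈ ℝ`. -/
theorem integral_eq_calL (β : ℝ) :
    (∫ t in (0 : ℝ)..(Lb β), 2 / (1 - β * t ^ 2)) = calL β := by
  rcases lt_trichotomy β 0 with hb | hb | hb
  · -- β < 0
    have hb0 : β ≠ 0 := hb.ne
    set c : ℝ := Real.sqrt (-β) with hc_def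
    have hc : 0 < c := Real.sqrt_pos.mpr (by linarith)
    have hc2 : c ^ 2 = -β := Real.sq_sqrt (by linarith)
    set L : ℝ := Lb β with hL_def
    have hLval : L = Real.sqrt ((1 - Real.exp (-β)) / β) := by simp [hL_def, Lb, hb0]
    clear_value L
    have hdivnn : 0 ≤ (1 - Real.exp (-β)) / β :=
      div_nonneg_iff.mpr (Or.inr ⟨by nlinarith [Real.one_le_exp (by linarith : (0:ℝ) ≤ -β)], hb.le⟩)
    have hL0 : 0 ≤ L := hLval ▸ Real.sqrt_nonneg _
    have hL2 : L ^ 2 = (1 - Real.exp (-β)) / β := by rw [hLval]; exact Real.sq_sqrt hdivnn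
    have hx2 : (c * L) ^ 2 = Real.exp (-β) - 1 := by
      rw [mul_pow, hc2, hL2]; field_simp; ring
    have hpos : ∀ t : ℝ, 0 < 1 - β * t ^ 2 := fun t => by nlinarith [sq_nonneg t]
    have key : ∀ t ∈ Set.uIcc (0:ℝ) L,
        HasDerivAt (fun t => (2 / c) * Real.arctan (c * t)) (2 / (1 - β * t ^ 2)) t := by
      intro t _
      have h1 : HasDerivAt (fun t : ℝ => c * t) c t := by
        simpa using (hasDerivAt_id t).const_mul c
      have h2 := (Real.hasDerivAt_arctan (c * t)).comp t h1
      have h3 := h2.const_mul (2 / c)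
      convert h3 using 1
      case e'_4 => rfl
      case e'_5 => rfl
      case e'_8 => rfl
      have h4 : 1 + (c * t) ^ 2 = 1 - β * t ^ 2 := by rw [mul_pow, hc2]; ring
      rw [h4]
      field_simp
    have hint : IntervalIntegrable (fun t => 2 / (1 - β * t ^ 2)) MeasureTheory.volume 0 L := by
      apply Continuous.intervalIntegrable
      exact continuous_const.div (by continuity) fun t => (hpos t).ne'
    rw [intervalIntegral.integral_eq_sub_of_hasDerivAt key hint]
    simp only [mul_zero, Real.arctan_zero, sub_zero]
    have hcalL : calL β = 2 / c * Real.arcsin (Real.sqrt (1 - Real.exp β)) := by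
      simp [calL, hb, not_lt.mpr hb.le, abs_of_neg hb, hc_def]
    rw [hcalL]
    congr 1
    rw [Real.arctan_eq_arcsin]
    congr 1
    have h1x2 : 1 + (c * L) ^ 2 = Real.exp (-β) := by rw [hx2]; ring
    rw [h1x2]
    have hrw : 1 - Real.exp β = (c * L) ^ 2 / Real.exp (-β) := by
      rw [hx2, Real.exp_neg]
      field_simp
    rw [hrw, Real.sqrt_div (sq_nonneg _), Real.sqrt_sq (mul_nonneg hc.le hL0)]
  · -- β = 0
    subst hb
    simp [Lb, calL]
  · -- β > 0
    have hb0 : β ≠ 0 := hb.ne'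
    set s : ℝ := Real.sqrt β with hs_def
    have hs : 0 < s := Real.sqrt_pos.mpr hb
    have hs2 : s ^ 2 = β := Real.sq_sqrt hb.le
    set L : ℝ := Lb β with hL_def
    have hLval : L = Real.sqrt ((1 - Real.exp (-β)) / β) := by simp [hL_def, Lb, hb0]
    clear_value L
    have hexplt : Real.exp (-β) < 1 := Real.exp_lt_one_iff.mpr (by linarith)
    have hexppos : 0 < Real.exp (-β) := Real.exp_pos _
    have hdivnn : 0 ≤ (1 - Real.exp (-β)) / β := div_nonneg (by linarith) hb.le
    have hL0 : 0 ≤ L := hLval ▸ Real.sqrt_nonneg _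
    have hL2 : L ^ 2 = (1 - Real.exp (-β)) / β := by rw [hLval]; exact Real.sq_sqrt hdivnn
    have hx2 : (s * L) ^ 2 = 1 - Real.exp (-β) := by
      rw [mul_pow, hs2, hL2]; field_simp
    have hxnn : 0 ≤ s * L := mul_nonneg hs.le hL0
    have hxlt : s * L < 1 := by nlinarith
    have hpos : ∀ t ∈ Set.uIcc (0:ℝ) L, 0 < 1 - β * t ^ 2 := by
      intro t ht
      rw [Set.uIcc_of_le hL0] at ht
      have ht2 : t ^ 2 ≤ L ^ 2 := pow_le_pow_left₀ ht.1 ht.2 2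
      have h1 : β * t ^ 2 ≤ β * L ^ 2 := mul_le_mul_of_nonneg_left ht2 hb.le
      have h2 : β * L ^ 2 = 1 - Real.exp (-β) := by rw [hL2]; field_simp
      nlinarith
    have key : ∀ t ∈ Set.uIcc (0:ℝ) L,
        HasDerivAt (fun t => (1 / s) * (Real.log (1 + s * t) - Real.log (1 - s * t)))
          (2 / (1 - β * t ^ 2)) t := by
      intro t ht
      rw [Set.uIcc_of_le hL0] at ht
      have hstnn : 0 ≤ s * t := mul_nonneg hs.le ht.1
      have hstlt : s * t < 1 := lt_of_le_of_lt (by nlinarith [ht.2]) hxlt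
      have hp1 : 0 < 1 + s * t := by linarith
      have hp2 : 0 < 1 - s * t := by linarith
      have h1 : HasDerivAt (fun t : ℝ => 1 + s * t) s t := by
        simpa using ((hasDerivAt_id t).const_mul s).const_add 1
      have h2 : HasDerivAt (fun t : ℝ => 1 - s * t) (-s) t := by
        simpa using ((hasDerivAt_id t).const_mul s).const_sub 1
      have hlog1 := h1.log hp1.ne'
      have hlog2 := h2.log hp2.ne'
      have h3 := (hlog1.sub hlog2).const_mul (1 / s)
      convert h3 using 1
      case e'_4 => rfl
      case e'_5 => rfl
      case e'_8 => rfl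
      have hd : 1 - β * t ^ 2 = (1 + s * t) * (1 - s * t) := by rw [← hs2]; ring
      rw [hd]
      field_simp
      ring
    have hint : IntervalIntegrable (fun t => 2 / (1 - β * t ^ 2)) MeasureTheory.volume 0 L := by
      apply ContinuousOn.intervalIntegrable
      apply ContinuousOn.div continuousOn_const (by fun_prop)
      exact fun t ht => (hpos t ht).ne'
    rw [intervalIntegral.integral_eq_sub_of_hasDerivAt key hint]
    have hcalL : calL β = 2 / s * Real.arsinh (Real.sqrt (Real.exp β - 1)) := by
      simp [calL, hb, hs_def]
    rw [hcalL]
    simp only [mul_zero, add_zero, sub_zero, Real.log_one]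
    set x : ℝ := s * L with hx_def
    clear_value s
    clear_value x
    set y : ℝ := Real.sqrt (Real.exp β - 1) with hy_def
    have hynn : 0 ≤ y := by rw [hy_def]; positivity
    have hy2 : y ^ 2 = Real.exp β - 1 := by
      rw [hy_def]; exact Real.sq_sqrt (by nlinarith [Real.one_le_exp hb.le])
    clear_value y
    have hmain : Real.log (1 + x) - Real.log (1 - x) = 2 * Real.arsinh y := by
      have hp1 : (0:ℝ) < 1 + x := by linarith
      have hp2 : (0:ℝ) < 1 - x := by linarith
      apply Real.exp_eq_exp.mp
      rw [Real.exp_sub, Real.exp_log hp1, Real.exp_log hp2, two_mul, Real.exp_add,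
        Real.exp_arsinh]
      set E : ℝ := Real.sqrt (1 + y ^ 2) with hE_def
      have hEnn' : 0 ≤ E := by rw [hE_def]; positivity
      have hE2' : E ^ 2 = 1 + y ^ 2 := by
        rw [hE_def]; exact Real.sq_sqrt (by nlinarith)
      clear_value E
      have hE2 : E ^ 2 = Real.exp β := by rw [hE2', hy2]; ring
      have hEnn : 0 ≤ E := hEnn'
      have hEy : y * E = Real.exp β * x := by
        have h1 : (y * E) ^ 2 = (Real.exp β * x) ^ 2 := by
          rw [mul_pow, mul_pow, hy2, hE2, hx2]
          rw [Real.exp_neg]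
          field_simp
        have h2 : 0 ≤ y * E := mul_nonneg hynn hEnn
        have h3 : 0 ≤ Real.exp β * x := mul_nonneg (Real.exp_pos β).le hxnn
        calc y * E = Real.sqrt ((y * E) ^ 2) := (Real.sqrt_sq h2).symm
          _ = Real.sqrt ((Real.exp β * x) ^ 2) := by rw [h1]
          _ = Real.exp β * x := Real.sqrt_sq h3
      have huv : Real.exp β * Real.exp (-β) = 1 := by
        rw [← Real.exp_add]; simp
      rw [div_eq_iff hp2.ne']
      linear_combination (x - 1) * hy2 + (x - 1) * hE2 + (2 * x - 2) * hEy
        + 2 * Real.exp β * hx2 - 2 * huv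
    rw [hmain]
    ring
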